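/- arXiv:1711.02075 — 2 statements merged into one kernel-verified Lean document; each statement's English description precedes it below -/
import Mathlib

section
/- Let s ∈ (0,1), α ∈ (0,s), β ∈ (0,1), and let θ : (0,∞) → (0,∞) be nonincreasing. Suppose that for some r > 0, a function w : Q_{2r} → ℝ and symmetric n×n matrices A_r and A_{2r} satisfy [w − xᵀA_ρ x]_{C_{t,x}^{β/(2s),β}(Q_ρ)} ≤ θ(ρ)·ρ^{α+s} for ρ = r and ρ = 2r, where xᵀA_ρ x denotes the quadratic form as a function of x (constant in t). Then ‖A_{2r} − A_r‖ ≤ C·θ(r)·r^{α+β+s−2}, where ‖M‖ = sup_{|x|=1} |xᵀMx| and C depends only on n, s, α and β. -/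
open Set MeasureTheory Metric Topology Filter
noncomputable section

/-- `ℝ^n` as Euclidean space. -/
abbrev En (n : ℕ) := EuclideanSpace ℝ (Fin n)

/-- The last coordinate `x_n` of a point `x ∈ ℝ^n`. -/
def lastC {n : ℕ} (x : En n) : ℝ := if h : 0 < n then x ⟨n - 1, by omega⟩ else 0

/-- The unit vector `e_n ∈ ℝ^n`. -/
def eLast (n : ℕ) : En n := if h : 0 < n then EuclideanSpace.single ⟨n - 1, by omega⟩ (1 : ℝ) else 0

/-- Ellipticity bounds `λ ≤ a ≤ Λ` on the unit sphere. -/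
def KernelBounds {n : ℕ} (lam Lam : ℝ) (a : En n → ℝ) : Prop :=
  ∀ y : En n, ‖y‖ = 1 → lam ≤ a y ∧ a y ≤ Lam

/-- `‖a‖_{C^{1,γ}(S^{n-1})} ≤ A`. -/
def SphereC1GammaBound {n : ℕ} (γ A : ℝ) (a : En n → ℝ) : Prop :=
  ∃ g : En n → (En n →L[ℝ] ℝ),
    (∀ y ∈ sphere (0 : En n) 1, HasFDerivWithinAt a (g y) (sphere (0 : En n) 1) y) ∧
    (∀ y ∈ sphere (0 : En n) 1, |a y| ≤ A ∧ ‖g y‖ ≤ A) ∧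
    (∀ y ∈ sphere (0 : En n) 1, ∀ z ∈ sphere (0 : En n) 1, ‖g y - g z‖ ≤ A * ‖y - z‖ ^ γ)

/-- The integrand of the nonlocal operator (1.3). -/
def Lintegrand (n : ℕ) (s : ℝ) (a u : En n → ℝ) (x y : En n) : ℝ :=
  (u (x + y) + u (x - y) - 2 * u x) * a (‖y‖⁻¹ • y) / ‖y‖ ^ ((n : ℝ) + 2 * s)

/-- The nonlocal operator `L` of the form (1.3). -/
def Lop (n : ℕ) (s : ℝ) (a u : En n → ℝ) (x : En n) : ℝ := ∫ y : En n, Lintegrand n s a u x y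

/-- `u` solves `∂_t u - L u = f` pointwise at `(t,x)`, the integral defining `Lu`
being absolutely convergent. -/
def SolvesAt (n : ℕ) (s : ℝ) (a : En n → ℝ) (u f : ℝ → En n → ℝ) (t : ℝ) (x : En n) : Prop :=
  Integrable (Lintegrand n s a (u t) x) ∧
  HasDerivAt (fun τ : ℝ => u τ x) (Lop n s a (u t) x + f t x) t

/-- `‖w‖_{L^∞(I×D)} ≤ M`. -/
def SupBnd {n : ℕ} (M : ℝ) (I : Set ℝ) (D : Set (En n)) (w : ℝ → En n → ℝ) : Prop :=
  ∀ t ∈ I, ∀ x ∈ D, |w t x| ≤ M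

/-- `[w]_{C_{t,x}^{θ/2s,θ}(I×D)} ≤ M`, for `θ ∈ (0,1)`. -/
def ParHolderBnd {n : ℕ} (s θ M : ℝ) (I : Set ℝ) (D : Set (En n)) (w : ℝ → En n → ℝ) : Prop :=
  ∀ t ∈ I, ∀ x ∈ D, ∀ t' ∈ I, ∀ x' ∈ D,
    |w t x - w t' x'| ≤ M * (|t - t'| ^ (θ / (2 * s)) + ‖x - x'‖ ^ θ)

/-- `[w]_{C_t^α(I×D)} ≤ M`. -/
def TimeHolderBnd {n : ℕ} (α M : ℝ) (I : Set ℝ) (D : Set (En n)) (w : ℝ → En n → ℝ) : Prop :=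
  ∀ x ∈ D, ∀ t ∈ I, ∀ t' ∈ I, |w t x - w t' x| ≤ M * |t - t'| ^ α

/-- Spatial gradient `∇_x w`. -/
def SpaceGrad {n : ℕ} (w : ℝ → En n → ℝ) (t : ℝ) (x : En n) : En n →L[ℝ] ℝ := fderiv ℝ (w t) x

/-- Spatial Hessian `D²_x w`. -/
def SpaceHess {n : ℕ} (w : ℝ → En n → ℝ) (t : ℝ) (x : En n) :
    ContinuousMultilinearMap ℝ (fun _ : Fin 2 => En n) ℝ := iteratedFDeriv ℝ 2 (w t) x

/-- Time derivative `∂_t w`. -/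
def TimeDeriv {n : ℕ} (w : ℝ → En n → ℝ) (t : ℝ) (x : En n) : ℝ := deriv (fun τ => w τ x) t

/-- `‖∇_x w‖_{L^∞(I×D)} ≤ M`. -/
def GradSupBnd {n : ℕ} (M : ℝ) (I : Set ℝ) (D : Set (En n)) (w : ℝ → En n → ℝ) : Prop :=
  ∀ t ∈ I, ∀ x ∈ D, ‖SpaceGrad w t x‖ ≤ M

/-- `[∇_x w]_{C_{t,x}^{θ/2s,θ}(I×D)} ≤ M`. -/
def GradParHolderBnd {n : ℕ} (s θ M : ℝ) (I : Set ℝ) (D : Set (En n)) (w : ℝ → En n → ℝ) : Prop :=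
  ∀ t ∈ I, ∀ x ∈ D, ∀ t' ∈ I, ∀ x' ∈ D,
    ‖SpaceGrad w t x - SpaceGrad w t' x'‖ ≤ M * (|t - t'| ^ (θ / (2 * s)) + ‖x - x'‖ ^ θ)

/-- `[∇_x w]_{C_t^α(I×D)} ≤ M`. -/
def GradTimeHolderBnd {n : ℕ} (α M : ℝ) (I : Set ℝ) (D : Set (En n)) (w : ℝ → En n → ℝ) : Prop :=
  ∀ x ∈ D, ∀ t ∈ I, ∀ t' ∈ I, ‖SpaceGrad w t x - SpaceGrad w t' x‖ ≤ M * |t - t'| ^ α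

/-- `[w]_{C_{t,x}^{θ/2s,θ}(I×D)} ≤ M`, covering both `θ ∈ (0,1)` and `θ ∈ (1,2)`. -/
def ParSemiBnd {n : ℕ} (s θ M : ℝ) (I : Set ℝ) (D : Set (En n)) (w : ℝ → En n → ℝ) : Prop :=
  (θ < 1 → ParHolderBnd s θ M I D w) ∧
  (1 < θ → TimeHolderBnd (θ / (2 * s)) M I D w ∧ GradParHolderBnd s (θ - 1) M I D w)

/-- `‖w‖_{C_{t,x}^{θ/2s,θ}(I×D)} ≤ M`, covering both `θ ∈ (0,1)` and `θ ∈ (1,2)`. -/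
def ParNormBnd {n : ℕ} (s θ M : ℝ) (I : Set ℝ) (D : Set (En n)) (w : ℝ → En n → ℝ) : Prop :=
  SupBnd M I D w ∧ (1 < θ → GradSupBnd M I D w) ∧ ParSemiBnd s θ M I D w

/-- `[w]_{C_{t,x}^{(α+β+s)/2s, α+β+s}(I×D)} ≤ M`, the higher-order parabolic seminorm
`[∂_t w]_{C^{(α+β-s)/2s, α+β-s}} + [∇_x w]_{C_t^{(α+β-s)/2s}} + [D²_x w]_{C^{(α+β-3s)/2s, α+β+s-2}}`,
each term being present when the corresponding exponent is positive. -/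
def HighSemiBnd {n : ℕ} (s α β M : ℝ) (I : Set ℝ) (D : Set (En n)) (w : ℝ → En n → ℝ) : Prop :=
  (0 < α + β - s → α + β - s < 1 → ParHolderBnd s (α + β - s) M I D (TimeDeriv w)) ∧
  (0 < α + β - s → GradTimeHolderBnd ((α + β - s) / (2 * s)) M I D w) ∧
  (0 < α + β + s - 2 → ∀ t ∈ I, ∀ x ∈ D, ∀ x' ∈ D,
      ‖SpaceHess w t x - SpaceHess w t x'‖ ≤ M * ‖x - x'‖ ^ (α + β + s - 2)) ∧
  (0 < α + β - 3 * s → ∀ x ∈ D, ∀ t ∈ I, ∀ t' ∈ I,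
      ‖SpaceHess w t x - SpaceHess w t' x‖ ≤ M * |t - t'| ^ ((α + β - 3 * s) / (2 * s)))

/-- `Γ` is a `C^{2,γ}` surface splitting `ℝ^n` into `Ω^+` and `Ω^-` with norm smaller
than 1: it is the graph `{x_n = φ(x')}` of a `C^{2,γ}` function `φ` (independent of the last
coordinate) with `C^{2,γ}` norm smaller than 1, passing through `0` with normal `e_n` there,
and `Ω^± = {±(x_n - φ) > 0}`. -/
def IsSplitSurface {n : ℕ} (γ : ℝ) (φ : En n → ℝ) (Ωp Ωm : Set (En n)) : Prop :=
  (∀ x y : En n, (∀ i : Fin n, (i : ℕ) ≠ n - 1 → x i = y i) → φ x = φ y) ∧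
  ContDiff ℝ 2 φ ∧ φ 0 = 0 ∧ fderiv ℝ φ 0 = 0 ∧
  (∃ c < (1 : ℝ),
    (∀ x, |φ x| + ‖fderiv ℝ φ x‖ + ‖iteratedFDeriv ℝ 2 φ x‖ ≤ c) ∧
    (∀ x y, ‖iteratedFDeriv ℝ 2 φ x - iteratedFDeriv ℝ 2 φ y‖ ≤ c * ‖x - y‖ ^ γ)) ∧
  Ωp = {x | φ x < lastC x} ∧ Ωm = {x | lastC x < φ x}

/-- `d` is a `C^{2,γ}(closure Ω^+)` function coinciding with `dist(·,Ω^-)` in a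
neighborhood of `Γ ∩ B_4` and vanishing outside `B_5`. -/
def IsDistLike {n : ℕ} (γ : ℝ) (Ωp Ωm : Set (En n)) (d : En n → ℝ) : Prop :=
  ContDiffOn ℝ 2 d (closure Ωp) ∧
  (∃ M : ℝ, ∀ x ∈ closure Ωp, ∀ y ∈ closure Ωp,
    ‖iteratedFDerivWithin ℝ 2 d (closure Ωp) x - iteratedFDerivWithin ℝ 2 d (closure Ωp) y‖
      ≤ M * ‖x - y‖ ^ γ) ∧
  (∃ U : Set (En n), IsOpen U ∧ frontier Ωp ∩ ball (0 : En n) 4 ⊆ U ∧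
    ∀ x ∈ U, d x = infDist x Ωm) ∧
  (∀ x : En n, x ∉ ball (0 : En n) 5 → d x = 0)

/-- control of the difference of quadratic approximations at dyadic scales. -/
theorem stmt_11
    (n : ℕ) (s α β : ℝ)
    (hs : s ∈ Ioo (0 : ℝ) 1) (hα : α ∈ Ioo 0 s) (hβ : β ∈ Ioo (0 : ℝ) 1) :
    ∃ C : ℝ, 0 < C ∧
      ∀ (θf : ℝ → ℝ) (w : ℝ → En n → ℝ) (A₁ A₂ : Matrix (Fin n) (Fin n) ℝ) (r : ℝ),
        0 < r →
        (∀ x > (0 : ℝ), 0 < θf x) → AntitoneOn θf (Ioi 0) →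
        A₁.IsSymm → A₂.IsSymm →
        -- `[w - xᵀA_r x]_{C^{β/2s,β}(Q_r)} ≤ θ(r) r^{α+s}`
        ParHolderBnd s β (θf r * r ^ (α + s)) (Ioo (-(r ^ (2 * s))) 0) (ball (0 : En n) r)
          (fun t x => w t x - ∑ i, ∑ j, x i * A₁ i j * x j) →
        -- `[w - xᵀA_{2r} x]_{C^{β/2s,β}(Q_{2r})} ≤ θ(2r) (2r)^{α+s}`
        ParHolderBnd s β (θf (2 * r) * (2 * r) ^ (α + s)) (Ioo (-((2 * r) ^ (2 * s))) 0)
          (ball (0 : En n) (2 * r))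
          (fun t x => w t x - ∑ i, ∑ j, x i * A₂ i j * x j) →
        -- conclusion: `‖A_{2r} - A_r‖ ≤ C θ(r) r^{α+β+s-2}`
        ∀ x : En n, ‖x‖ = 1 →
          |∑ i, ∑ j, x i * (A₂ - A₁) i j * x j| ≤ C * θf r * r ^ (α + β + s - 2) := by
  obtain ⟨hs0, hs1⟩ := hs
  obtain ⟨hα0, hαs⟩ := hα
  obtain ⟨hβ0, hβ1⟩ := hβ
  refine ⟨(16/5) * (1 + 2 ^ (α + s)), by positivity, ?_⟩
  intro θf w A₁ A₂ r hr hθpos hθanti _ _ hP1 hP2 x hx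
  set Q : ℝ := ∑ i, ∑ j, x i * (A₂ - A₁) i j * x j with hQ
  set x₁ : En n := (r/2) • x with hx₁def
  set x₂ : En n := (3*r/4) • x with hx₂def
  have hx₁n : ‖x₁‖ = r/2 := by
    rw [hx₁def, norm_smul, hx, mul_one, Real.norm_eq_abs, abs_of_pos (by positivity)]
  have hx₂n : ‖x₂‖ = 3*r/4 := by
    rw [hx₂def, norm_smul, hx, mul_one, Real.norm_eq_abs, abs_of_pos (by positivity)]
  have hx₁b : x₁ ∈ ball (0 : En n) r := by
    rw [mem_ball_zero_iff, hx₁n]; linarith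
  have hx₂b : x₂ ∈ ball (0 : En n) r := by
    rw [mem_ball_zero_iff, hx₂n]; linarith
  have hx₁b' : x₁ ∈ ball (0 : En n) (2*r) := by
    rw [mem_ball_zero_iff, hx₁n]; linarith
  have hx₂b' : x₂ ∈ ball (0 : En n) (2*r) := by
    rw [mem_ball_zero_iff, hx₂n]; linarith
  have hrs : (0:ℝ) < r ^ (2*s) := Real.rpow_pos_of_pos hr _
  have hrs2 : r ^ (2*s) ≤ (2*r) ^ (2*s) :=
    Real.rpow_le_rpow hr.le (by linarith) (by positivity)
  set t₀ : ℝ := -(r ^ (2*s)) / 2 with ht₀def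
  have ht₀ : t₀ ∈ Ioo (-(r ^ (2*s))) 0 := ⟨by rw [ht₀def]; linarith, by rw [ht₀def]; linarith⟩
  have ht₀' : t₀ ∈ Ioo (-((2*r) ^ (2*s))) 0 :=
    ⟨by rw [ht₀def]; linarith, by rw [ht₀def]; linarith⟩
  have hzero : |t₀ - t₀| ^ (β / (2*s)) = 0 := by
    rw [sub_self, abs_zero, Real.zero_rpow (by positivity)]
  have h1 := hP1 t₀ ht₀ x₂ hx₂b t₀ ht₀ x₁ hx₁b
  have h2 := hP2 t₀ ht₀' x₂ hx₂b' t₀ ht₀' x₁ hx₁b'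
  rw [hzero, zero_add] at h1 h2
  simp only at h1 h2
  -- the quadratic form difference
  have qhom : ∀ c : ℝ, (∑ i, ∑ j, (c • x) i * (A₂ - A₁) i j * (c • x) j) = c^2 * Q := by
    intro c
    rw [hQ, Finset.mul_sum]
    refine Finset.sum_congr rfl fun i _ => ?_
    rw [Finset.mul_sum]
    refine Finset.sum_congr rfl fun j _ => ?_
    simp only [PiLp.smul_apply, smul_eq_mul]
    ring
  have qsplit : ∀ y : En n, (∑ i, ∑ j, y i * (A₂ - A₁) i j * y j)
      = (∑ i, ∑ j, y i * A₂ i j * y j) - (∑ i, ∑ j, y i * A₁ i j * y j) := by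
    intro y
    rw [← Finset.sum_sub_distrib]
    refine Finset.sum_congr rfl fun i _ => ?_
    rw [← Finset.sum_sub_distrib]
    refine Finset.sum_congr rfl fun j _ => ?_
    simp only [Matrix.sub_apply]
    ring
  have hxd : ‖x₂ - x₁‖ = r/4 := by
    have hsub : x₂ - x₁ = (r/4) • x := by
      rw [hx₂def, hx₁def, ← sub_smul]; congr 1; ring
    rw [hsub, norm_smul, hx, mul_one, Real.norm_eq_abs, abs_of_pos (by positivity)]
  -- key identity
  have hkey : ((w t₀ x₂ - ∑ i, ∑ j, x₂ i * A₁ i j * x₂ j)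
        - (w t₀ x₁ - ∑ i, ∑ j, x₁ i * A₁ i j * x₁ j))
      - ((w t₀ x₂ - ∑ i, ∑ j, x₂ i * A₂ i j * x₂ j)
        - (w t₀ x₁ - ∑ i, ∑ j, x₁ i * A₂ i j * x₁ j))
      = (5/16 * r^2) * Q := by
    have e2 := qhom (3*r/4)
    have e1 := qhom (r/2)
    rw [← hx₂def] at e2
    rw [← hx₁def] at e1
    rw [qsplit x₂] at e2
    rw [qsplit x₁] at e1
    linear_combination e2 - e1
  have habs : |(5/16 * r^2) * Q| ≤ (θf r * r ^ (α + s)) * ‖x₂ - x₁‖ ^ β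
      + (θf (2*r) * (2*r) ^ (α + s)) * ‖x₂ - x₁‖ ^ β := by
    rw [← hkey]
    exact (abs_sub _ _).trans (add_le_add h1 h2)
  -- bound the RHS
  have hθ2 : θf (2*r) ≤ θf r := hθanti (mem_Ioi.mpr hr) (mem_Ioi.mpr (by linarith)) (by linarith)
  have hθr : 0 < θf r := hθpos r hr
  have h2r : (2*r) ^ (α + s) = 2 ^ (α + s) * r ^ (α + s) :=
    Real.mul_rpow (by norm_num) hr.le
  have hrb : ‖x₂ - x₁‖ ^ β ≤ r ^ β := by
    rw [hxd]
    exact Real.rpow_le_rpow (by positivity) (by linarith) hβ0.le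
  have hrbpos : (0:ℝ) ≤ ‖x₂ - x₁‖ ^ β := by rw [hxd]; positivity
  have hM2 : θf (2*r) * (2*r) ^ (α + s) ≤ θf r * (2 ^ (α + s) * r ^ (α + s)) := by
    rw [h2r]
    have h2pos : (0:ℝ) ≤ 2 ^ (α + s) * r ^ (α + s) := by positivity
    exact mul_le_mul hθ2 le_rfl h2pos hθr.le
  have hras : (0:ℝ) < r ^ (α + s) := Real.rpow_pos_of_pos hr _
  have hrbeta : (0:ℝ) < r ^ β := Real.rpow_pos_of_pos hr _
  have hfin : r ^ (α + s) * r ^ β = r ^ (α + β + s - 2) * r ^ 2 := by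
    rw [← Real.rpow_natCast r 2, ← Real.rpow_add hr, ← Real.rpow_add hr]
    congr 1
    push_cast
    ring
  set P : ℝ := (1 + 2 ^ (α + s)) * θf r * r ^ (α + β + s - 2) with hP
  have hmain : (5/16 * r^2) * |Q| ≤ P * r ^ 2 := by
    have h3 : |(5/16 * r^2) * Q| = (5/16 * r^2) * |Q| := by
      rw [abs_mul, abs_of_pos (by positivity : (0:ℝ) < 5/16 * r^2)]
    rw [← h3]
    calc |(5/16 * r^2) * Q|
        ≤ (θf r * r ^ (α + s)) * ‖x₂ - x₁‖ ^ β
          + (θf (2*r) * (2*r) ^ (α + s)) * ‖x₂ - x₁‖ ^ β := habs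
      _ ≤ (θf r * r ^ (α + s)) * (r ^ β)
          + (θf r * (2 ^ (α + s) * r ^ (α + s))) * (r ^ β) := by
          refine add_le_add (mul_le_mul_of_nonneg_left hrb (by positivity)) ?_
          exact mul_le_mul hM2 hrb hrbpos (by positivity)
      _ = (1 + 2 ^ (α + s)) * θf r * (r ^ (α + s) * r ^ β) := by ring
      _ = P * r ^ 2 := by rw [hfin, hP]; ring
  have hPnn : (0:ℝ) ≤ P := by
    rw [hP]; positivity
  have hr2 : (0:ℝ) < r ^ 2 := by positivity
  have hq5 : (5/16) * |Q| ≤ P := by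
    have hcomm : ((5:ℝ)/16 * |Q|) * r^2 = (5/16 * r^2) * |Q| := by ring
    have h' : ((5:ℝ)/16 * |Q|) * r^2 ≤ P * r^2 := by rw [hcomm]; exact hmain
    exact le_of_mul_le_mul_right h' hr2
  rw [hP] at hq5
  calc |Q| ≤ (16/5) * ((1 + 2 ^ (α + s)) * θf r * r ^ (α + β + s - 2)) := by linarith
    _ = 16/5 * (1 + 2 ^ (α + s)) * θf r * r ^ (α + β + s - 2) := by ring
end
end

section
/- Let s ∈ (0,1), β ∈ (0,1) and α > 0 with α+β < 2s. Let w : (−∞,0)×ℝ^n → ℝ be continuous with w(t,x) = 0 whenever x_n ≤ 0, and suppose that for every τ ≤ 0 and every h ∈ ℝ^n with h_n = 0 there exists a constant K(τ,h) ∈ ℝ such that w(t+τ, x+h) − w(t,x) = K(τ,h)·(x_n)_+^s for all (t,x) ∈ (−∞,0)×ℝ^n. Assume furthermore the growth condition [w/(x_n)_+^s]_{C_{t,x}^{β/(2s),β}(Q_R^+)} ≤ C R^α for all R ≥ 1 and some constant C > 0. Then w is independent of t, and there exist a ∈ ℝ^n, b ∈ ℝ and a function ψ : ℝ → ℝ with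 ψ = 0 on (−∞,0] such that w(t,x) = (x_n)_+^s·(a·x + b) + ψ(x_n) for all (t,x). -/
open Set MeasureTheory Metric Topology Filter
noncomputable section

section Helpers

lemma lastC_add {n : ℕ} (x y : En n) : lastC (x + y) = lastC x + lastC y := by
  unfold lastC; split <;> simp

lemma lastC_sub {n : ℕ} (x y : En n) : lastC (x - y) = lastC x - lastC y := by
  unfold lastC; split <;> simp

lemma lastC_smul {n : ℕ} (c : ℝ) (x : En n) : lastC (c • x) = c * lastC x := by
  unfold lastC; split <;> simp

lemma lastC_zero {n : ℕ} : lastC (0 : En n) = 0 := by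
  unfold lastC; split <;> simp

lemma lastC_eLast {n : ℕ} (hn : 0 < n) : lastC (eLast n) = 1 := by
  unfold lastC eLast
  rw [dif_pos hn, dif_pos hn, EuclideanSpace.single_apply, if_pos rfl]

lemma norm_eLast {n : ℕ} (hn : 0 < n) : ‖eLast n‖ = 1 := by
  unfold eLast; rw [dif_pos hn, EuclideanSpace.norm_single]; simp

lemma abs_lastC_le {n : ℕ} (x : En n) : |lastC x| ≤ ‖x‖ := by
  unfold lastC; split
  · exact EuclideanSpace.norm_eq x ▸ (by
      rename_i h
      calc |x ⟨n-1, by omega⟩| = Real.sqrt (|x ⟨n-1, by omega⟩|^2) := by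
            rw [Real.sqrt_sq_eq_abs, abs_abs]
        _ ≤ Real.sqrt (∑ i, ‖x i‖^2) := by
            apply Real.sqrt_le_sqrt
            have := Finset.single_le_sum (f := fun i => ‖x i‖^2) (fun i _ => by positivity)
              (Finset.mem_univ (⟨n-1, by omega⟩ : Fin n))
            simpa using this)
  · simpa using norm_nonneg x

lemma euclid_eq_sum_single {n : ℕ} (x : En n) :
    x = ∑ i, x i • EuclideanSpace.single i (1:ℝ) := by
  have := (EuclideanSpace.basisFun (Fin n) ℝ).sum_repr x
  simp only [EuclideanSpace.basisFun_apply, EuclideanSpace.basisFun_repr] at this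
  exact this.symm

end Helpers

set_option maxHeartbeats 1000000 in
/-- one-dimensional reduction in the proof of the half-space Liouville
theorem. -/
theorem stmt_14
    (n : ℕ) (s β α : ℝ)
    (hn : 0 < n) (hs : s ∈ Ioo (0 : ℝ) 1) (hβ : β ∈ Ioo (0 : ℝ) 1) (hα : 0 < α)
    (hαβ : α + β < 2 * s)
    (w : ℝ → En n → ℝ) (C : ℝ) (hC : 0 < C)
    -- `w` is continuous on `(-∞,0) × ℝ^n`
    (hcont : ContinuousOn (fun p : ℝ × En n => w p.1 p.2) (Iio (0 : ℝ) ×ˢ univ))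
    -- `w = 0` whenever `x_n ≤ 0`
    (hbdry : ∀ t < (0 : ℝ), ∀ x : En n, lastC x ≤ 0 → w t x = 0)
    -- tangential/time increments of `w` are multiples of `(x_n)_+^s`
    (hincr : ∀ τ ≤ (0 : ℝ), ∀ h : En n, lastC h = 0 → ∃ K : ℝ,
      ∀ t < (0 : ℝ), ∀ x : En n, w (t + τ) (x + h) - w t x = K * max (lastC x) 0 ^ s)
    -- growth control `[w/(x_n)_+^s]_{C^{β/2s,β}(Q_R^+)} ≤ C R^α`
    (hgrowth : ∀ R ≥ (1 : ℝ),
      ParHolderBnd s β (C * R ^ α) (Ioo (-(R ^ (2 * s))) 0)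
        (ball (0 : En n) R ∩ {x | 0 < lastC x})
        (fun t x => w t x / max (lastC x) 0 ^ s)) :
    -- `w` is independent of `t` and has the claimed form
    (∀ t < (0 : ℝ), ∀ t' < (0 : ℝ), ∀ x : En n, w t x = w t' x) ∧
    ∃ (a : En n) (b : ℝ) (ψ : ℝ → ℝ),
      (∀ z ≤ (0 : ℝ), ψ z = 0) ∧
      ∀ t < (0 : ℝ), ∀ x : En n,
        w t x = max (lastC x) 0 ^ s * ((∑ i, a i * x i) + b) + ψ (lastC x) := by
  obtain ⟨hs0, hs1⟩ := hs
  obtain ⟨hβ0, hβ1⟩ := hβ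
  have h2s : 0 < 2 * s := by linarith
  set e : En n := eLast n with he
  have hle : lastC e = 1 := lastC_eLast hn
  have hme : max (lastC e) 0 ^ s = (1:ℝ) := by
    rw [hle, max_eq_left (by norm_num : (0:ℝ) ≤ 1), Real.one_rpow]
  -- the unique increment constant
  set K : ℝ → En n → ℝ := fun τ h => w (-1 + τ) (e + h) - w (-1) e with hKdef
  have hK : ∀ τ ≤ (0:ℝ), ∀ h : En n, lastC h = 0 → ∀ t < (0:ℝ), ∀ x : En n,
      w (t + τ) (x + h) - w t x = K τ h * max (lastC x) 0 ^ s := by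
    intro τ hτ h hh
    obtain ⟨K', hK'⟩ := hincr τ hτ h hh
    have h1 : K τ h = K' := by
      have h2 := hK' (-1) (by norm_num) e
      rw [hme, mul_one] at h2
      simpa [hKdef] using h2
    intro t ht x
    rw [h1]; exact hK' t ht x
  -- additivity of K
  have hadd : ∀ τ ≤ (0:ℝ), ∀ τ' ≤ (0:ℝ), ∀ h h' : En n, lastC h = 0 → lastC h' = 0 →
      K (τ + τ') (h + h') = K τ h + K τ' h' := by
    intro τ hτ τ' hτ' h h' hh hh'
    have e1 := hK (τ + τ') (by linarith) (h + h') (by rw [lastC_add, hh, hh']; ring)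
      (-1) (by norm_num) e
    have e3 := hK τ' hτ' h' hh' (-1) (by norm_num) e
    rw [hme, mul_one] at e1 e3
    have hl : max (lastC (e + h')) 0 ^ s = (1:ℝ) := by
      rw [lastC_add, hh', hle, add_zero, max_eq_left (by norm_num : (0:ℝ) ≤ 1), Real.one_rpow]
    have e2 := hK τ hτ h hh (-1 + τ') (by linarith) (e + h')
    rw [hl, mul_one] at e2
    have e2' : w (-1 + (τ + τ')) (e + (h + h')) - w (-1 + τ') (e + h') = K τ h := by
      rw [show (-1:ℝ) + (τ + τ') = (-1 + τ') + τ from by ring,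
        show e + (h + h') = (e + h') + h from by abel]
      exact e2
    linarith [e1, e2', e3]
  -- quantitative bound on K
  have hbnd : ∀ R : ℝ, 2 ≤ R → ∀ τ ≤ (0:ℝ), -(R ^ (2*s)) + 1 ≤ τ →
      ∀ h : En n, lastC h = 0 → ‖h‖ ≤ R - 2 →
      |K τ h| ≤ C * R ^ α * (|τ| ^ (β / (2*s)) + ‖h‖ ^ β) := by
    intro R hR τ hτ hτR h hh hhR
    have hR1 : (1:ℝ) ≤ R := by linarith
    have hRs : (1:ℝ) ≤ R ^ (2*s) := Real.one_le_rpow hR1 (le_of_lt h2s)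
    have hg := hgrowth R hR1
    have hl1 : lastC (e + h) = 1 := by rw [lastC_add, hh, hle, add_zero]
    have hm1 : max (lastC (e + h)) 0 ^ s = (1:ℝ) := by
      rw [hl1, max_eq_left (by norm_num : (0:ℝ) ≤ 1), Real.one_rpow]
    have m1 : (-1/2 + τ) ∈ Ioo (-(R^(2*s))) (0:ℝ) := ⟨by linarith, by linarith⟩
    have m2 : (-1/2 : ℝ) ∈ Ioo (-(R^(2*s))) (0:ℝ) := ⟨by linarith, by norm_num⟩
    have m3 : (e + h) ∈ ball (0:En n) R ∩ {x | 0 < lastC x} := by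
      refine ⟨?_, by simp only [mem_setOf_eq, hl1]; norm_num⟩
      rw [mem_ball, dist_zero_right]
      calc ‖e + h‖ ≤ ‖e‖ + ‖h‖ := norm_add_le _ _
        _ ≤ 1 + (R - 2) := by rw [norm_eLast hn]; linarith
        _ < R := by linarith
    have m4 : e ∈ ball (0:En n) R ∩ {x | 0 < lastC x} := by
      refine ⟨?_, by simp only [mem_setOf_eq, hle]; norm_num⟩
      rw [mem_ball, dist_zero_right, norm_eLast hn]; linarith
    have key := hg (-1/2 + τ) m1 (e + h) m3 (-1/2) m2 e m4
    simp only [hm1, hme, div_one] at key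
    have hKval : w (-1/2 + τ) (e + h) - w (-1/2) e = K τ h := by
      have := hK τ hτ h hh (-1/2) (by norm_num) e
      rw [hme, mul_one] at this
      exact this
    rw [hKval] at key
    have ht' : (-1/2 + τ) - (-1/2) = τ := by ring
    have hx' : (e + h) - e = h := by abel
    rw [ht', hx'] at key
    exact key
  have hK00 : K 0 0 = 0 := by
    have := hK 0 le_rfl 0 lastC_zero (-1) (by norm_num) e
    rw [hme, mul_one] at this
    simpa using this.symm
  -- multiples
  have hmul : ∀ τ ≤ (0:ℝ), ∀ m : ℕ, K ((m:ℝ) * τ) 0 = (m:ℝ) * K τ 0 := by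
    intro τ hτ m
    induction m with
    | zero => simpa using hK00
    | succ k ih =>
      have hkτ : (k:ℝ) * τ ≤ 0 := mul_nonpos_of_nonneg_of_nonpos (Nat.cast_nonneg k) hτ
      have h1 := hadd ((k:ℝ) * τ) hkτ τ hτ 0 0 lastC_zero lastC_zero
      rw [add_zero] at h1
      rw [Nat.cast_succ, show ((k:ℝ) + 1) * τ = (k:ℝ) * τ + τ from by ring, h1, ih]
      ring
  -- vanishing of the time increment
  have hKτ0 : ∀ τ ≤ (0:ℝ), K τ 0 = 0 := by
    intro τ hτ
    rcases eq_or_lt_of_le hτ with h0 | hτ'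
    · rw [h0]; exact hK00
    set c : ℝ := -τ with hc
    have hc0 : 0 < c := by simp only [hc]; linarith
    set D : ℝ := C * 2 ^ α * ((c+1) ^ (α/(2*s)) * c ^ (β/(2*s))) with hD
    have hstep : ∀ m : ℕ, 1 ≤ m → |K τ 0| ≤ D * (m:ℝ) ^ ((α+β)/(2*s) - 1) := by
      intro m hm
      have hm0 : (0:ℝ) < (m:ℝ) := by exact_mod_cast hm
      have hm1 : (1:ℝ) ≤ (m:ℝ) := by exact_mod_cast hm
      set X : ℝ := ((m:ℝ)*c+1) ^ ((1:ℝ)/(2*s)) with hX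
      have hmc0 : 0 < (m:ℝ)*c := by positivity
      have hmc1 : (1:ℝ) ≤ (m:ℝ)*c+1 := by linarith
      have hX1 : (1:ℝ) ≤ X := Real.one_le_rpow hmc1 (by positivity)
      set R : ℝ := max 2 X with hR
      have hR2 : (2:ℝ) ≤ R := le_max_left _ _
      have hR0 : (0:ℝ) ≤ R := by linarith
      have hX2s : X ^ (2*s) = (m:ℝ)*c+1 := by
        rw [hX, ← Real.rpow_mul (by linarith),
          show (1:ℝ)/(2*s) * (2*s) = 1 from by field_simp]
        exact Real.rpow_one _
      have hR2s : (m:ℝ)*c+1 ≤ R ^ (2*s) := by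
        rw [← hX2s]
        exact Real.rpow_le_rpow (by linarith) (le_max_right _ _) (le_of_lt h2s)
      have hτm : (m:ℝ) * τ ≤ 0 := mul_nonpos_of_nonneg_of_nonpos (Nat.cast_nonneg m) hτ
      have habs : |(m:ℝ) * τ| = (m:ℝ) * c := by
        rw [abs_mul, abs_of_nonneg (Nat.cast_nonneg m), abs_of_neg hτ']
      have hmt : (m:ℝ)*τ = -((m:ℝ)*c) := by rw [hc]; ring
      have hb := hbnd R hR2 ((m:ℝ)*τ) hτm (by linarith [hmt, hR2s]) 0 lastC_zero
        (by rw [norm_zero]; linarith)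
      rw [hmul τ hτ m, habs, norm_zero, Real.zero_rpow (ne_of_gt hβ0), add_zero] at hb
      have hbb : (m:ℝ) * |K τ 0| ≤ C * R^α * (((m:ℝ)*c)^(β/(2*s))) := by
        calc (m:ℝ) * |K τ 0| = |(m:ℝ) * K τ 0| := by
              rw [abs_mul, abs_of_nonneg (le_of_lt hm0)]
          _ ≤ _ := hb
      have hRle : R ≤ 2 * X := max_le (by linarith) (by linarith)
      have hRα : R ^ α ≤ 2 ^ α * ((m:ℝ)*c+1) ^ (α/(2*s)) := by
        calc R ^ α ≤ (2*X) ^ α := Real.rpow_le_rpow hR0 hRle (le_of_lt hα)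
          _ = 2 ^ α * X ^ α := Real.mul_rpow (by norm_num) (by linarith)
          _ = 2 ^ α * ((m:ℝ)*c+1) ^ (α/(2*s)) := by
              rw [hX, ← Real.rpow_mul (by linarith), div_mul_eq_mul_div, one_mul]
      have h1 : ((m:ℝ)*c+1) ^ (α/(2*s)) ≤ ((m:ℝ)*(c+1)) ^ (α/(2*s)) :=
        Real.rpow_le_rpow (by linarith) (by nlinarith) (by positivity)
      have h2 : ((m:ℝ)*(c+1)) ^ (α/(2*s)) = (m:ℝ)^(α/(2*s)) * (c+1)^(α/(2*s)) :=
        Real.mul_rpow (le_of_lt hm0) (by linarith)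
      have h3 : ((m:ℝ)*c) ^ (β/(2*s)) = (m:ℝ)^(β/(2*s)) * c^(β/(2*s)) :=
        Real.mul_rpow (le_of_lt hm0) (le_of_lt hc0)
      have h4 : (m:ℝ)^(α/(2*s)) * (m:ℝ)^(β/(2*s)) = (m:ℝ)^((α+β)/(2*s)) := by
        rw [← Real.rpow_add hm0, ← add_div]
      have hpos1 : (0:ℝ) ≤ ((m:ℝ)*c)^(β/(2*s)) := Real.rpow_nonneg (le_of_lt hmc0) _
      have hcomb : (m:ℝ) * |K τ 0| ≤ D * (m:ℝ)^((α+β)/(2*s)) := by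
        calc (m:ℝ) * |K τ 0| ≤ C * R^α * (((m:ℝ)*c)^(β/(2*s))) := hbb
          _ ≤ C * (2^α * ((m:ℝ)*(c+1))^(α/(2*s))) * (((m:ℝ)*c)^(β/(2*s))) := by
              apply mul_le_mul_of_nonneg_right _ hpos1
              exact mul_le_mul_of_nonneg_left (le_trans hRα
                (mul_le_mul_of_nonneg_left h1 (Real.rpow_nonneg (by norm_num) _)))
                (le_of_lt hC)
          _ = D * (m:ℝ)^((α+β)/(2*s)) := by
              rw [h2, h3, hD, ← h4]; ring
      have hfin : |K τ 0| ≤ D * (m:ℝ)^((α+β)/(2*s)) / (m:ℝ) := by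
        rw [le_div_iff₀ hm0]; linarith
      calc |K τ 0| ≤ D * (m:ℝ)^((α+β)/(2*s)) / (m:ℝ) := hfin
        _ = D * (m:ℝ)^((α+β)/(2*s) - 1) := by
            rw [Real.rpow_sub hm0, Real.rpow_one, mul_div_assoc]
    have hy : 0 < 1 - (α+β)/(2*s) := by
      have : (α+β)/(2*s) < 1 := (div_lt_one h2s).mpr hαβ
      linarith
    have hlim : Tendsto (fun m : ℕ => D * (m:ℝ) ^ ((α+β)/(2*s) - 1)) atTop (𝓝 0) := by
      have h1 : Tendsto (fun x : ℝ => x ^ (-(1 - (α+β)/(2*s)))) atTop (𝓝 0) :=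
        tendsto_rpow_neg_atTop hy
      have h2 := (h1.comp (tendsto_natCast_atTop_atTop (R := ℝ))).const_mul D
      rw [mul_zero] at h2
      simpa [show -(1 - (α+β)/(2*s)) = (α+β)/(2*s) - 1 from by ring, Function.comp] using h2
    have hle0 : |K τ 0| ≤ 0 := ge_of_tendsto hlim (eventually_atTop.2 ⟨1, hstep⟩)
    exact abs_eq_zero.mp (le_antisymm hle0 (abs_nonneg _))
  -- time independence
  have hbase : ∀ t < (0:ℝ), ∀ τ ≤ (0:ℝ), ∀ x : En n, w (t + τ) x = w t x := by
    intro t ht τ hτ x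
    have h1 := hK τ hτ 0 lastC_zero t ht x
    rw [hKτ0 τ hτ, zero_mul, add_zero] at h1
    linarith [h1]
  have htind : ∀ t < (0:ℝ), ∀ t' < (0:ℝ), ∀ x : En n, w t x = w t' x := by
    intro t ht t' ht' x
    rcases le_total t' t with h | h
    · have := hbase t ht (t' - t) (by linarith) x
      rw [show t + (t' - t) = t' from by ring] at this
      exact this.symm
    · have := hbase t' ht' (t - t') (by linarith) x
      rw [show t' + (t - t') = t from by ring] at this
      exact this
  -- tangential projection
  set p : En n → En n := fun h => h - lastC h • e with hp
  have hpt : ∀ h, lastC (p h) = 0 := by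
    intro h; rw [hp]; simp only []
    rw [lastC_sub, lastC_smul, hle, mul_one, sub_self]
  have hpadd : ∀ h h', p (h + h') = p h + p h' := by
    intro h h'; rw [hp]; simp only []
    rw [lastC_add, add_smul]; abel
  have hpsub : ∀ h h', p (h - h') = p h - p h' := by
    intro h h'; rw [hp]; simp only []
    rw [lastC_sub, sub_smul]; abel
  have hpzero : p 0 = 0 := by rw [hp]; simp [lastC_zero]
  have hKsub : ∀ a b : En n, lastC a = 0 → lastC b = 0 → K 0 a - K 0 b = K 0 (a - b) := by
    intro a b ha hb
    have h1 := hadd 0 le_rfl 0 le_rfl (a - b) b (by rw [lastC_sub, ha, hb, sub_zero]) hb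
    rw [add_zero, sub_add_cancel] at h1
    linarith [h1]
  -- the tangential increment functional
  set L : En n → ℝ := fun h => K 0 (p h) with hL
  have hLadd : ∀ h h', L (h + h') = L h + L h' := by
    intro h h'
    rw [hL]; simp only []
    rw [hpadd]
    have := hadd 0 le_rfl 0 le_rfl (p h) (p h') (hpt h) (hpt h')
    rw [add_zero] at this
    exact this
  have h32s : (1:ℝ) ≤ (3:ℝ) ^ (2*s) := Real.one_le_rpow (by norm_num) (le_of_lt h2s)
  have hsmall : ∀ z : En n, lastC z = 0 → ‖z‖ ≤ 1 → |K 0 z| ≤ C * 3 ^ α * ‖z‖ ^ β := by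
    intro z hz hz1
    have := hbnd 3 (by norm_num) 0 le_rfl (by linarith) z hz (by linarith)
    rw [abs_zero, Real.zero_rpow (by positivity), zero_add] at this
    exact this
  have hpnorm : ∀ z : En n, ‖p z‖ ≤ 2 * ‖z‖ := by
    intro z
    rw [hp]; simp only []
    calc ‖z - lastC z • e‖ ≤ ‖z‖ + ‖lastC z • e‖ := norm_sub_le _ _
      _ = ‖z‖ + |lastC z| * ‖e‖ := by rw [norm_smul, Real.norm_eq_abs]
      _ ≤ ‖z‖ + ‖z‖ * 1 := by
          refine add_le_add le_rfl (mul_le_mul (abs_lastC_le z) (le_of_eq (norm_eLast hn))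
            (norm_nonneg _) (norm_nonneg _))
      _ = 2 * ‖z‖ := by ring
  have hLcont : Continuous L := by
    rw [continuous_iff_continuousAt]
    intro h₀
    have hdiff : ∀ h, L h - L h₀ = K 0 (p (h - h₀)) := by
      intro h
      rw [hL]; simp only []
      rw [hpsub]
      exact hKsub (p h) (p h₀) (hpt h) (hpt h₀)
    have htend0 : Tendsto (fun h : En n => ‖h - h₀‖) (𝓝 h₀) (𝓝 0) := by
      have : Tendsto (fun h : En n => h - h₀) (𝓝 h₀) (𝓝 (h₀ - h₀)) :=
        ((continuous_id.sub continuous_const).tendsto h₀)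
      rw [sub_self] at this
      simpa using this.norm
    have hg : Tendsto (fun h : En n => C * 3 ^ α * (2 * ‖h - h₀‖) ^ β) (𝓝 h₀) (𝓝 0) := by
      have h1 : Tendsto (fun h : En n => 2 * ‖h - h₀‖) (𝓝 h₀) (𝓝 0) := by
        simpa using htend0.const_mul 2
      have h2 : ContinuousAt (fun y : ℝ => y ^ β) 0 :=
        Real.continuousAt_rpow_const 0 β (Or.inr (le_of_lt hβ0))
      have h3 := (h2.tendsto.comp h1).const_mul (C * 3 ^ α)
      rw [Real.zero_rpow (ne_of_gt hβ0), mul_zero] at h3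
      exact h3
    have hev : ∀ᶠ h : En n in 𝓝 h₀, ‖L h - L h₀‖ ≤ C * 3 ^ α * (2 * ‖h - h₀‖) ^ β := by
      have hev1 : ∀ᶠ h : En n in 𝓝 h₀, ‖h - h₀‖ < 1/2 :=
        htend0.eventually_lt_const (by norm_num)
      filter_upwards [hev1] with h hh
      rw [hdiff h, Real.norm_eq_abs]
      calc |K 0 (p (h - h₀))| ≤ C * 3 ^ α * ‖p (h - h₀)‖ ^ β := by
            refine hsmall _ (hpt _) ?_
            calc ‖p (h - h₀)‖ ≤ 2 * ‖h - h₀‖ := hpnorm _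
              _ ≤ 1 := by linarith
        _ ≤ C * 3 ^ α * (2 * ‖h - h₀‖) ^ β := by
            refine mul_le_mul_of_nonneg_left ?_ (by positivity)
            exact Real.rpow_le_rpow (norm_nonneg _) (hpnorm _) (le_of_lt hβ0)
    have hT : Tendsto (fun h : En n => L h - L h₀) (𝓝 h₀) (𝓝 0) :=
      squeeze_zero_norm' hev hg
    have := hT.add (tendsto_const_nhds (x := L h₀))
    rw [zero_add] at this
    simpa [ContinuousAt] using this
  -- linearity of L
  set F : En n →+ ℝ := AddMonoidHom.mk' L hLadd with hF
  set ℓ : En n →L[ℝ] ℝ := F.toRealLinearMap hLcont with hℓdef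
  have hℓ : ∀ h, ℓ h = L h := by
    intro h
    have := AddMonoidHom.coe_toRealLinearMap F hLcont
    rw [hℓdef]
    exact congrFun this h
  -- the linear coefficient vector
  set a : En n := (show En n from WithLp.toLp 2 (fun i => L (EuclideanSpace.single i 1))) with ha
  have haapp : ∀ i, a i = L (EuclideanSpace.single i 1) := fun i => rfl
  have hsum : ∀ x : En n, ∑ i, a i * x i = L x := by
    intro x
    have h1 : ∑ i, a i * x i = ∑ i, x i * ℓ (EuclideanSpace.single i 1) := by
      refine Finset.sum_congr rfl fun i _ => ?_
      rw [haapp, hℓ, mul_comm]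
    rw [h1, ← hℓ]
    have h2 : ∑ i, x i * ℓ (EuclideanSpace.single i 1)
        = ℓ (∑ i, x i • EuclideanSpace.single i (1:ℝ)) := by
      rw [map_sum]
      refine Finset.sum_congr rfl fun i _ => ?_
      rw [ContinuousLinearMap.map_smul]; rfl
    rw [h2, ← euclid_eq_sum_single]
  refine ⟨htind, a, 0, fun z => w (-1) (z • e), ?_, ?_⟩
  · intro z hz
    refine hbdry (-1) (by norm_num) _ ?_
    rw [lastC_smul, hle, mul_one]; exact hz
  · intro t ht x
    have h1 : w t x = w (-1) x := htind t ht (-1) (by norm_num) x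
    have hx0 : lastC (lastC x • e) = lastC x := by rw [lastC_smul, hle, mul_one]
    have e2 := hK 0 le_rfl (p x) (hpt x) (-1) (by norm_num) (lastC x • e)
    rw [hx0, add_zero] at e2
    have hxdecomp : lastC x • e + p x = x := by
      rw [hp]; simp only []; abel
    rw [hxdecomp] at e2
    rw [h1, hsum x, add_zero]
    have : L x = K 0 (p x) := rfl
    rw [this]
    linarith [e2]
end
end
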